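/- Let v ≥ 1 and let d_1, …, d_v be nonnegative integers, not all zero. Then Σ_{1≤j,k≤v} B(d_j − d_k) < v · Σ_{j=1}^{v} B(d_j), where B(m) = m(m+1)/2 for integers m ≥ 0 and B(m) = 0 for m < 0. -/
import Mathlib


/-- `Bb m = m(m+1)/2` for `m ≥ 0` and `Bb m = 0` for `m < 0`;
equivalently `Bb m` is the binomial coefficient `C(m+1, 2)` with the
convention `C(a, 2) = 0` for `a ≤ 0`. -/
def Bb (m : ℤ) : ℤ := if 0 ≤ m then m * (m + 1) / 2 else 0

lemma Bb_nonneg (m : ℤ) : 0 ≤ Bb m := by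
  unfold Bb
  split
  · exact Int.ediv_nonneg (by nlinarith) (by norm_num)
  · rfl

lemma Bb_mono {a b : ℤ} (h0 : 0 ≤ a) (h : a ≤ b) : Bb a ≤ Bb b := by
  unfold Bb
  rw [if_pos h0, if_pos (h0.trans h)]
  exact Int.ediv_le_ediv (by norm_num) (by nlinarith)

lemma Bb_sub_le (a b : ℕ) : Bb ((a : ℤ) - b) ≤ Bb a := by
  by_cases h : (0 : ℤ) ≤ (a : ℤ) - b
  · exact Bb_mono h (by simp)
  · rw [Bb, if_neg h]; exact Bb_nonneg _
lemma Bb_pos {n : ℤ} (h : 1 ≤ n) : 0 < Bb n := by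
  rw [Bb, if_pos (by linarith)]
  have : (1 : ℤ) ≤ n * (n + 1) / 2 := by
    calc (1 : ℤ) = 2 / 2 := by norm_num
    _ ≤ n * (n + 1) / 2 := Int.ediv_le_ediv (by norm_num) (by nlinarith)
  linarith

/-- If `d_1, …, d_v` are nonnegative integers, not all zero, then
`Σ_{1≤j,k≤v} B(d_j − d_k) < v · Σ_j B(d_j)`. -/
theorem sum_B_sub_lt (v : ℕ) (hv : 1 ≤ v) (d : Fin v → ℕ) (hd : ∃ j, d j ≠ 0) :
    (∑ j, ∑ k, Bb ((d j : ℤ) - (d k : ℤ))) < (v : ℤ) * ∑ j, Bb (d j : ℤ) := by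
  obtain ⟨j0, hj0⟩ := hd
  have hrhs : (v : ℤ) * ∑ j, Bb (d j : ℤ) = ∑ j : Fin v, ∑ _k : Fin v, Bb (d j : ℤ) := by
    rw [Finset.mul_sum]
    congr 1
    ext j
    simp [Finset.sum_const, mul_comm]
  rw [hrhs]
  apply Finset.sum_lt_sum
  · intro j _
    exact Finset.sum_le_sum fun k _ => Bb_sub_le _ _
  · refine ⟨j0, Finset.mem_univ _, ?_⟩
    apply Finset.sum_lt_sum
    · intro k _; exact Bb_sub_le _ _
    · refine ⟨j0, Finset.mem_univ _, ?_⟩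
      have : ((d j0 : ℤ) - d j0) = 0 := by ring
      rw [this]
      have h0 : Bb 0 = 0 := by rfl
      rw [h0]
      exact Bb_pos (by exact_mod_cast Nat.one_le_iff_ne_zero.mpr hj0)
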